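/- arXiv:1410.4770 — 8 statements merged into one kernel-verified Lean document; each statement's English description precedes it below -/
import Mathlib

section
/- For R ≥ 100 and β = 0.01, for every t ∈ ℝ and every w ∈ ℂ with Re[w] = −(11/10)β and |Im[w]| ≤ 2β², the real part of the vector field u(t,w) = 2R w̄ + R e^{−it/2} w̄² − (i/2)w satisfies Re[u(t,w)] < 0. -/
open Complex

theorem stmt_2 (R β : ℝ) (hR : R ≥ 100) (hβ : β = 0.01) (t : ℝ) (w : ℂ)
    (hre : w.re = -(11 / 10) * β) (him : |w.im| ≤ 2 * β ^ 2) :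
    (2 * (R : ℂ) * (starRingEnd ℂ) w
      + (R : ℂ) * Complex.exp (-Complex.I * t / 2) * (starRingEnd ℂ) w ^ 2
      - Complex.I / 2 * w).re < 0 := by
  set z := Complex.exp (-Complex.I * t / 2) with hz
  have habs : ‖z‖ = 1 := by
    rw [hz, Complex.norm_exp]
    have : (-Complex.I * t / 2).re = 0 := by simp
    rw [this, Real.exp_zero]
  have hsq : z.re ^ 2 + z.im ^ 2 = 1 := by
    have := Complex.sq_norm z
    rw [habs, Complex.normSq_apply] at this
    nlinarith [this]
  have him' : -(2 * β ^ 2) ≤ w.im ∧ w.im ≤ 2 * β ^ 2 := abs_le.mp him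
  obtain ⟨h1, h2⟩ := him'
  have hz1 : z.re ≤ 1 := by nlinarith [sq_nonneg z.im]
  have hz2 : -1 ≤ z.re := by nlinarith [sq_nonneg z.im]
  have hz3 : z.im ≤ 1 := by nlinarith [sq_nonneg z.re]
  have hz4 : -1 ≤ z.im := by nlinarith [sq_nonneg z.re]
  simp only [Complex.add_re, Complex.sub_re, Complex.mul_re, Complex.mul_im,
    Complex.ofReal_re, Complex.ofReal_im, Complex.I_re, Complex.I_im,
    Complex.div_re, Complex.div_im, Complex.conj_re, Complex.conj_im,
    Complex.re_ofNat, Complex.im_ofNat, pow_two, Complex.normSq_apply]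
  subst hβ
  rw [hre]
  norm_num at h1 h2 ⊢
  have hR' : (0:ℝ) ≤ R := by linarith
  nlinarith [mul_nonneg hR' (mul_nonneg (by linarith : (0:ℝ) ≤ 1 - z.re)
      (by nlinarith : (0:ℝ) ≤ 121/1000000 - w.im*w.im)),
    mul_nonneg hR' (mul_nonneg (by linarith : (0:ℝ) ≤ 1 + z.im)
      (by linarith : (0:ℝ) ≤ 1/5000 + w.im)),
    mul_nonneg hR' (mul_nonneg (by linarith : (0:ℝ) ≤ 1 - z.im)
      (by linarith : (0:ℝ) ≤ 1/5000 - w.im)),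
    mul_nonneg hR' (mul_nonneg (by linarith : (0:ℝ) ≤ 1 + z.im)
      (by linarith : (0:ℝ) ≤ 1/5000 - w.im)),
    mul_nonneg hR' (mul_nonneg (by linarith : (0:ℝ) ≤ 1 - z.im)
      (by linarith : (0:ℝ) ≤ 1/5000 + w.im))]
end

section
/- For R ≥ 100 and β = 0.01, for every t ∈ ℝ and every w ∈ ℂ with Im[w] = −2β² and |Re[w]| ≤ (11/10)β, the imaginary part of the vector field u(t,w) = 2R w̄ + R e^{−it/2} w̄² − (i/2)w satisfies Im[u(t,w)] > 0. -/
open Complex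

theorem stmt_3 (R β : ℝ) (hR : R ≥ 100) (hβ : β = 0.01) (t : ℝ) (w : ℂ)
    (him : w.im = -2 * β ^ 2) (hre : |w.re| ≤ (11 / 10) * β) :
    (2 * (R : ℂ) * (starRingEnd ℂ) w
      + (R : ℂ) * Complex.exp (-Complex.I * t / 2) * (starRingEnd ℂ) w ^ 2
      - Complex.I / 2 * w).im > 0 := by
  subst hβ
  have hy : w.im = -0.0002 := by rw [him]; norm_num
  have hx : |w.re| ≤ 0.011 := by linarith [hre]
  set E := Complex.exp (-Complex.I * t / 2) with hEdef
  have hE : ‖E‖ = 1 := by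
    rw [hEdef, Complex.norm_exp]
    simp
  set m := ((R : ℂ) * E * (starRingEnd ℂ) w ^ 2) with hm
  have habsm : ‖m‖ = R * (w.re ^ 2 + w.im ^ 2) := by
    rw [hm, norm_mul, norm_mul, hE, norm_pow, Complex.norm_conj, Complex.norm_real, Real.norm_eq_abs,
      _root_.abs_of_nonneg (by linarith : (0:ℝ) ≤ R), Complex.sq_norm, Complex.normSq_apply]
    ring
  have hmim : |m.im| ≤ R * (w.re ^ 2 + w.im ^ 2) := by
    rw [← habsm]; exact Complex.abs_im_le_norm m
  have him_eq : (2 * (R : ℂ) * (starRingEnd ℂ) w + m - Complex.I / 2 * w).im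
      = 2 * R * (-w.im) + m.im - w.re / 2 := by
    simp [Complex.sub_im, Complex.add_im, Complex.mul_im, Complex.div_im]
    ring
  rw [him_eq]
  have hx1 : -0.011 ≤ w.re := by cases abs_le.mp hx; linarith
  have hx2 : w.re ≤ 0.011 := (abs_le.mp hx).2
  have h1 : -(R * (w.re ^ 2 + w.im ^ 2)) ≤ m.im := (abs_le.mp hmim).1
  have hsq : w.re ^ 2 ≤ 0.000121 := by
    nlinarith [_root_.sq_abs w.re, hx, abs_nonneg w.re]
  have hkey : R * (w.re ^ 2 + w.im ^ 2) ≤ R * 0.00012104 := by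
    rw [hy]; nlinarith
  rw [hy] at *
  linarith
end

section
/- Let R ≥ 100, N ≥ 0 with R ≥ 100N, and β = 0.01. For every t ∈ [−β, β] and every z ∈ ℂ with |Re z| ≤ 0.98 and |Im z| ≤ 1, and for every f with |f(t,z)| ≤ N, the vector field v(t,z) = R e^{it}(z̄² − 1) + f(t,z) satisfies Re[v(t,z)] ≤ N + R(−cos β + (Re z)²/cos β) < 0. -/
open Complex

set_option maxHeartbeats 1000000 in
theorem stmt_4 (R N β : ℝ) (hR : R ≥ 100) (hN : 0 ≤ N) (hRN : R ≥ 100 * N)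
    (hβ : β = 0.01) (f : ℝ → ℂ → ℂ) (t : ℝ) (ht : t ∈ Set.Icc (-β) β) (z : ℂ)
    (hre : |z.re| ≤ 0.98) (him : |z.im| ≤ 1) (hf : ‖f t z‖ ≤ N) :
    ((R : ℂ) * Complex.exp (Complex.I * t) * ((starRingEnd ℂ) z ^ 2 - 1) + f t z).re
        ≤ N + R * (-Real.cos β + z.re ^ 2 / Real.cos β)
      ∧ N + R * (-Real.cos β + z.re ^ 2 / Real.cos β) < 0 := by
  obtain ⟨ht1, ht2⟩ := ht
  set x := z.re with hx
  set y := z.im with hy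
  set c := Real.cos t with hc
  set s := Real.sin t with hs
  set cβ := Real.cos β with hcb
  -- basic bounds
  have hβ0 : (0:ℝ) < β := by rw [hβ]; norm_num
  have hcβlow : (0.9999:ℝ) ≤ cβ := by
    have h := Real.one_sub_sq_div_two_le_cos (x := β)
    rw [← hcb] at h
    rw [hβ] at h
    nlinarith [h]
  have hcβpos : (0:ℝ) < cβ := by linarith
  -- cos t ≥ cos β
  have hct : cβ ≤ c := by
    have habs : |t| ≤ β := abs_le.mpr ⟨ht1, ht2⟩
    have : Real.cos β ≤ Real.cos |t| := by
      apply Real.cos_le_cos_of_nonneg_of_le_pi (abs_nonneg t) _ habs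
      rw [hβ]; nlinarith [Real.pi_gt_three]
    rwa [Real.cos_abs] at this
  have hpyth : s ^ 2 + c ^ 2 = 1 := Real.sin_sq_add_cos_sq t
  -- real part computation
  have hexp : Complex.exp (Complex.I * t) = (c : ℂ) + (s : ℂ) * Complex.I := by
    rw [mul_comm, Complex.exp_mul_I, Complex.ofReal_cos, Complex.ofReal_sin]
  have hre_eq : ((R : ℂ) * Complex.exp (Complex.I * t) * ((starRingEnd ℂ) z ^ 2 - 1)
      + f t z).re = R * (c * (x ^ 2 - y ^ 2 - 1) + 2 * x * y * s) + (f t z).re := by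
    rw [hexp]
    simp [Complex.add_re, Complex.mul_re, Complex.mul_im, Complex.sub_re, Complex.sub_im,
      pow_two, Complex.mul_re, Complex.mul_im]
    ring
  have hfre : (f t z).re ≤ N := le_trans (Complex.re_le_norm _) hf
  have hx2 : x ^ 2 ≤ 0.9604 := by
    have := abs_le.mp hre
    nlinarith [this.1, this.2]
  have hx2nn : (0:ℝ) ≤ x ^ 2 := sq_nonneg x
  -- key bracket inequality
  have hkey : c * (x ^ 2 - y ^ 2 - 1) + 2 * x * y * s ≤ -cβ + x ^ 2 / cβ := by
    have h1 : c * (x ^ 2 - y ^ 2) + 2 * x * y * s ≤ x ^ 2 / cβ := by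
      rw [le_div_iff₀ hcβpos]
      rcases le_or_gt 0 (c * (x ^ 2 - y ^ 2) + 2 * x * y * s) with hA | hA
      · have h2 : (c * (x ^ 2 - y ^ 2) + 2 * x * y * s) * cβ
            ≤ (c * (x ^ 2 - y ^ 2) + 2 * x * y * s) * c :=
          mul_le_mul_of_nonneg_left hct hA
        nlinarith [sq_nonneg (x * s - c * y), hpyth]
      · nlinarith [mul_neg_of_neg_of_pos hA hcβpos, sq_nonneg x]
    linarith
  constructor
  · rw [hre_eq]
    have hR0 : (0:ℝ) < R := by linarith
    have := mul_le_mul_of_nonneg_left hkey hR0.le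
    linarith
  · have hdiv : x ^ 2 / cβ ≤ 0.9604 / 0.9999 :=
      div_le_div₀ (by norm_num) hx2 (by norm_num) hcβlow
    have hNle : N ≤ R / 100 := by linarith
    have hbr : -cβ + x ^ 2 / cβ ≤ -0.039 := by
      have : (0.9604:ℝ) / 0.9999 ≤ 0.9609 := by norm_num
      linarith
    have h3 : R * (-cβ + x ^ 2 / cβ) ≤ R * (-0.039) :=
      mul_le_mul_of_nonneg_left hbr (by linarith)
    linarith
end

section
/- Let (X,d) and (Y,ρ) be compact metric spaces, f : X → X and g : Y → Y homeomorphisms, and Φ : X → Y a continuous surjection with Φ ∘ f = g ∘ Φ. Let y₁ ∈ Y be a periodic point of g whose fiber Φ⁻¹({y₁}) is a single point {o₁}, with o₁ periodic for f. If y ∈ Y satisfies α_g(y) = Orb(y₁, g) (the α-limit set of y under g equals the orbit of y₁), then every point o ∈ Φ⁻¹({y}) satisfies α_f(o) = Orb(o₁, f). -/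
open Filter

/-- The full (two-sided) orbit of a point under a bijection. -/
def fullOrbit {X : Type*} (f : Equiv.Perm X) (x : X) : Set X :=
  Set.range (fun k : ℤ => (f ^ k) x)

/-- The α-limit set of a point under a bijection: cluster points of the
backward orbit sequence `x, f⁻¹ x, f⁻² x, …`. -/
def alphaLimit {X : Type*} [TopologicalSpace X] (f : Equiv.Perm X) (x : X) : Set X :=
  {p | MapClusterPt p atTop (fun n : ℕ => (f ^ (-(n : ℤ))) x)}

/-- A point is periodic for a bijection if some positive iterate fixes it. -/
def isPeriodicPt {X : Type*} (f : Equiv.Perm X) (x : X) : Prop :=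
  ∃ n : ℕ, 1 ≤ n ∧ (f ^ (n : ℤ)) x = x

section aux

variable {X Y : Type*}

/-- Equivariance for all integer powers. -/
lemma semiconj_zpow (f : Equiv.Perm X) (g : Equiv.Perm Y) (Φ : X → Y)
    (hΦsurj : Function.Surjective Φ)
    (hsemi : ∀ x : X, Φ (f x) = g (Φ x)) :
    ∀ (k : ℤ) (x : X), Φ ((f ^ k) x) = (g ^ k) (Φ x) := by
  have hsymm : ∀ x : X, Φ (f.symm x) = g.symm (Φ x) := by
    intro x
    have := hsemi (f.symm x)
    rw [f.apply_symm_apply] at this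
    rw [this, g.symm_apply_apply]
  intro k
  induction k using Int.induction_on with
  | zero => simp
  | succ n ih =>
    intro x
    have h1 : (f ^ ((n : ℤ) + 1)) x = (f ^ (n : ℤ)) (f x) := by
      rw [zpow_add_one]; rfl
    have h2 : (g ^ ((n : ℤ) + 1)) (Φ x) = (g ^ (n : ℤ)) (g (Φ x)) := by
      rw [zpow_add_one]; rfl
    rw [h1, h2, ih (f x), hsemi]
  | pred n ih =>
    intro x
    have h1 : (f ^ (-(n : ℤ) - 1)) x = (f ^ (-(n : ℤ))) (f.symm x) := by
      rw [zpow_sub_one]; rfl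
    have h2 : (g ^ (-(n : ℤ) - 1)) (Φ x) = (g ^ (-(n : ℤ))) (g.symm (Φ x)) := by
      rw [zpow_sub_one]; rfl
    rw [h1, h2, ih (f.symm x), hsymm]

/-- If a positive power fixes a point, integer powers depend only on the exponent
mod that period. -/
lemma zpow_eq_of_dvd (f : Equiv.Perm X) (x : X) (n : ℕ) (hx : (f ^ (n : ℤ)) x = x)
    {a b : ℤ} (h : (n : ℤ) ∣ a - b) : (f ^ a) x = (f ^ b) x := by
  obtain ⟨t, ht⟩ := h
  have ha : a = b + (n : ℤ) * t := by omega
  have hnt : (f ^ ((n : ℤ) * t)) x = x := by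
    rw [zpow_mul]
    exact Equiv.Perm.zpow_apply_eq_self_of_apply_eq_self (by simpa using hx) t
  rw [ha, zpow_add, Equiv.Perm.mul_apply, hnt]

end aux

theorem stmt_6 {X Y : Type*} [MetricSpace X] [CompactSpace X]
    [MetricSpace Y] [CompactSpace Y]
    (f : Equiv.Perm X) (hf : Continuous f) (hf' : Continuous f.symm)
    (g : Equiv.Perm Y) (hg : Continuous g) (hg' : Continuous g.symm)
    (Φ : X → Y) (hΦ : Continuous Φ) (hΦsurj : Function.Surjective Φ)
    (hsemi : ∀ x : X, Φ (f x) = g (Φ x))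
    (y₁ : Y) (hy₁ : isPeriodicPt g y₁)
    (o₁ : X) (hfiber : Φ ⁻¹' {y₁} = {o₁}) (ho₁ : isPeriodicPt f o₁)
    (y : Y) (hy : alphaLimit g y = fullOrbit g y₁) :
    ∀ o ∈ Φ ⁻¹' {y}, alphaLimit f o = fullOrbit f o₁ := by
  intro o ho
  have hoy : Φ o = y := ho
  have hequiv := semiconj_zpow f g Φ hΦsurj hsemi
  -- fibers over the orbit of y₁ are singletons
  have hfib : ∀ k : ℤ, ∀ x : X, Φ x = (g ^ k) y₁ → x = (f ^ k) o₁ := by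
    intro k x hx
    have : Φ ((f ^ (-k)) x) = y₁ := by
      rw [hequiv, hx, ← Equiv.Perm.mul_apply, ← zpow_add]
      simp
    have hmem : (f ^ (-k)) x ∈ Φ ⁻¹' {y₁} := this
    rw [hfiber] at hmem
    have : (f ^ (-k)) x = o₁ := hmem
    have := congrArg (f ^ k) this
    rwa [← Equiv.Perm.mul_apply, ← zpow_add, add_neg_cancel, zpow_zero,
      Equiv.Perm.one_apply] at this
  -- α_f(o) ⊆ Orb(o₁)
  have hsub : alphaLimit f o ⊆ fullOrbit f o₁ := by
    intro p hp
    have hΦp : Φ p ∈ alphaLimit g y := by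
      have := hp.continuousAt_comp hΦ.continuousAt
      have heq : (Φ ∘ fun n : ℕ => (f ^ (-(n : ℤ))) o) =
          fun n : ℕ => (g ^ (-(n : ℤ))) y := by
        funext n
        simp only [Function.comp_apply, hequiv, hoy]
      rwa [heq] at this
    rw [hy] at hΦp
    obtain ⟨k, hk⟩ := hΦp
    exact ⟨k, (hfib k p hk.symm).symm⟩
  -- shift invariance of α_f(o)
  have hshift : ∀ p ∈ alphaLimit f o, f p ∈ alphaLimit f o := by
    intro p hp
    have h1 : MapClusterPt (f p) atTop ((f : X → X) ∘ fun n : ℕ => (f ^ (-(n : ℤ))) o) :=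
      hp.continuousAt_comp hf.continuousAt
    have heq : (fun n : ℕ => (f ^ (-(n : ℤ))) o) =
        (((f : X → X) ∘ fun n : ℕ => (f ^ (-(n : ℤ))) o) ∘ fun n => n + 1) := by
      funext n
      simp only [Function.comp_apply]
      have h : (-(n : ℤ)) = 1 + -((n + 1 : ℕ) : ℤ) := by push_cast; ring
      rw [h, zpow_add, zpow_one]
      rfl
    show MapClusterPt (f p) atTop _
    rw [heq, mapClusterPt_comp, map_add_atTop_eq_nat]
    exact h1
  have hshift_pow : ∀ (m : ℕ), ∀ p ∈ alphaLimit f o, (f ^ (m : ℤ)) p ∈ alphaLimit f o := by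
    intro m
    induction m with
    | zero => simpa using fun p hp => hp
    | succ m ih =>
      intro p hp
      have := hshift _ (ih p hp)
      have heq : f ((f ^ (m : ℤ)) p) = (f ^ ((m : ℕ) + 1 : ℤ)) p := by
        have h : ((m : ℕ) + 1 : ℤ) = 1 + (m : ℤ) := by ring
        rw [h, zpow_add, zpow_one]
        rfl
      rw [heq] at this
      push_cast
      push_cast at this
      exact this
  -- nonemptiness of α_f(o)
  have hne : ∃ p, p ∈ alphaLimit f o := by
    have : (map (fun n : ℕ => (f ^ (-(n : ℤ))) o) atTop).NeBot := map_neBot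
    obtain ⟨p, hp⟩ := exists_clusterPt_of_compactSpace
      (map (fun n : ℕ => (f ^ (-(n : ℤ))) o) atTop)
    exact ⟨p, hp⟩
  obtain ⟨p, hp⟩ := hne
  obtain ⟨k, hk⟩ := hsub hp
  obtain ⟨n, hn1, hno₁⟩ := ho₁
  apply Set.Subset.antisymm hsub
  rintro q ⟨j, hj⟩
  -- choose m ≡ j - k mod n, m ≥ 0
  set m : ℕ := ((j - k) % (n : ℤ)).toNat with hm
  have hnpos : (0 : ℤ) < n := by exact_mod_cast hn1
  have hmod_nonneg : 0 ≤ (j - k) % (n : ℤ) := Int.emod_nonneg _ (by omega)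
  have hmz : (m : ℤ) = (j - k) % (n : ℤ) := Int.toNat_of_nonneg hmod_nonneg
  have hmem : (f ^ (m : ℤ)) p ∈ alphaLimit f o := hshift_pow m p hp
  have hpq : (f ^ (m : ℤ)) p = q := by
    rw [← hk, ← Equiv.Perm.mul_apply, ← zpow_add, ← hj]
    apply zpow_eq_of_dvd f o₁ n hno₁
    have : (m : ℤ) + k - j = (j - k) % (n : ℤ) - (j - k) := by rw [hmz]; ring
    rw [this]
    exact ⟨-((j - k) / (n : ℤ)), by rw [Int.emod_def]; ring⟩
  rwa [hpq] at hmem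
end

section
/- Let (X,d) and (Y,ρ) be compact metric spaces, f : X → X and g : Y → Y homeomorphisms, and Φ : X → Y a continuous surjection with Φ ∘ f = g ∘ Φ. Let y₂ ∈ Y be a periodic point of g with Φ⁻¹({y₂}) = {o₂} a singleton, o₂ periodic for f. If y ∈ Y satisfies ω_g(y) = Orb(y₂, g), then every point o ∈ Φ⁻¹({y}) satisfies ω_f(o) = Orb(o₂, f). -/
open Filter

/-- The ω-limit set of a point under a bijection: cluster points of the
forward orbit sequence `x, f x, f² x, …`. -/
def omegaLimSet {X : Type*} [TopologicalSpace X] (f : Equiv.Perm X) (x : X) : Set X :=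
  {p | MapClusterPt p atTop (fun n : ℕ => (f ^ (n : ℤ)) x)}

/-- Cluster points of a sequence are unchanged by shifting the sequence by one. -/
private lemma mapClusterPt_shift {X : Type*} [TopologicalSpace X] {p : X} {a : ℕ → X} :
    MapClusterPt p atTop (fun n : ℕ => a (n + 1)) ↔ MapClusterPt p atTop a := by
  have : (fun n : ℕ => a (n + 1)) = a ∘ (fun n : ℕ => n + 1) := rfl
  rw [this, mapClusterPt_comp, Filter.map_add_atTop_eq_nat 1]

theorem stmt_7 {X Y : Type*} [MetricSpace X] [CompactSpace X]
    [MetricSpace Y] [CompactSpace Y]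
    (f : Equiv.Perm X) (hf : Continuous f) (hf' : Continuous f.symm)
    (g : Equiv.Perm Y) (hg : Continuous g) (hg' : Continuous g.symm)
    (Φ : X → Y) (hΦ : Continuous Φ) (hΦsurj : Function.Surjective Φ)
    (hsemi : ∀ x : X, Φ (f x) = g (Φ x))
    (y₂ : Y) (hy₂ : isPeriodicPt g y₂)
    (o₂ : X) (hfiber : Φ ⁻¹' {y₂} = {o₂}) (ho₂ : isPeriodicPt f o₂)
    (y : Y) (hy : omegaLimSet g y = fullOrbit g y₂) :
    ∀ o ∈ Φ ⁻¹' {y}, omegaLimSet f o = fullOrbit f o₂ := by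
  -- semiconjugacy for inverse
  have hsemi' : ∀ x : X, Φ (f⁻¹ x) = g⁻¹ (Φ x) := by
    intro x
    have h1 := hsemi (f⁻¹ x)
    have h2 : f (f⁻¹ x) = x := Equiv.apply_symm_apply f x
    rw [h2] at h1
    rw [h1]
    exact (Equiv.symm_apply_apply g _).symm
  -- semiconjugacy for integer powers
  have hsc : ∀ (k : ℤ) (x : X), Φ ((f ^ k) x) = (g ^ k) (Φ x) := by
    intro k
    induction k using Int.induction_on with
    | zero => simp
    | succ n ih =>
      intro x
      have hfp : (f ^ ((n : ℤ) + 1)) x = (f ^ (n : ℤ)) (f x) := by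
        rw [zpow_add_one]; rfl
      have hgp : (g ^ ((n : ℤ) + 1)) (Φ x) = (g ^ (n : ℤ)) (g (Φ x)) := by
        rw [zpow_add_one]; rfl
      rw [hfp, hgp, ih (f x), hsemi x]
    | pred n ih =>
      intro x
      have hfp : (f ^ (-(n : ℤ) - 1)) x = (f ^ (-(n : ℤ))) (f⁻¹ x) := by
        rw [zpow_sub_one]; rfl
      have hgp : (g ^ (-(n : ℤ) - 1)) (Φ x) = (g ^ (-(n : ℤ))) (g⁻¹ (Φ x)) := by
        rw [zpow_sub_one]; rfl
      rw [hfp, hgp, ih (f⁻¹ x), hsemi' x]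
  -- omega limit set is invariant under f and f⁻¹
  have hstepf : ∀ (o p : X), p ∈ omegaLimSet f o → f p ∈ omegaLimSet f o := by
    intro o p hp
    have h1 : MapClusterPt (f p) atTop ((f : X → X) ∘ (fun n : ℕ => (f ^ (n : ℤ)) o)) :=
      hp.continuousAt_comp hf.continuousAt
    have h2 : ((f : X → X) ∘ (fun n : ℕ => (f ^ (n : ℤ)) o))
        = (fun n : ℕ => (f ^ ((n + 1 : ℕ) : ℤ)) o) := by
      funext n
      show f ((f ^ (n : ℤ)) o) = (f ^ ((n : ℤ) + 1)) o
      rw [add_comm ((n : ℤ)) 1, zpow_add, zpow_one]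
      rfl
    rw [h2] at h1
    exact mapClusterPt_shift.mp h1
  have hstepf' : ∀ (o p : X), p ∈ omegaLimSet f o → f⁻¹ p ∈ omegaLimSet f o := by
    intro o p hp
    have h1 : MapClusterPt (f⁻¹ p) atTop ((f⁻¹ : Equiv.Perm X) ∘ (fun n : ℕ => (f ^ (n : ℤ)) o)) :=
      hp.continuousAt_comp hf'.continuousAt
    -- the composed sequence, shifted by one, is the original sequence
    have h2 : (fun n : ℕ => ((f⁻¹ : Equiv.Perm X) ∘ (fun m : ℕ => (f ^ (m : ℤ)) o)) (n + 1))
        = fun n : ℕ => (f ^ (n : ℤ)) o := by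
      funext n
      show f⁻¹ ((f ^ (((n : ℤ)) + 1)) o) = (f ^ (n : ℤ)) o
      rw [add_comm ((n : ℤ)) 1, zpow_add, zpow_one]
      exact Equiv.symm_apply_apply f _
    have h3 := mapClusterPt_shift (p := f⁻¹ p)
      (a := (f⁻¹ : Equiv.Perm X) ∘ (fun m : ℕ => (f ^ (m : ℤ)) o))
    rw [h2] at h3
    exact h3.mpr h1
  have hzstep : ∀ (m : ℤ) (o p : X), p ∈ omegaLimSet f o → (f ^ m) p ∈ omegaLimSet f o := by
    intro m
    induction m using Int.induction_on with
    | zero => intro o p hp; simpa using hp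
    | succ n ih =>
      intro o p hp
      have : (f ^ ((n : ℤ) + 1)) p = f ((f ^ (n : ℤ)) p) := by
        rw [add_comm, zpow_add, zpow_one]; rfl
      rw [this]
      exact hstepf o _ (ih o p hp)
    | pred n ih =>
      intro o p hp
      have : (f ^ (-(n : ℤ) - 1)) p = f⁻¹ ((f ^ (-(n : ℤ))) p) := by
        rw [sub_eq_add_neg, add_comm, zpow_add, zpow_neg_one]; rfl
      rw [this]
      exact hstepf' o _ (ih o p hp)
  intro o ho
  have hoy : Φ o = y := ho
  -- forward inclusion: every omega-limit point of o is on the orbit of o₂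
  have hsub : omegaLimSet f o ⊆ fullOrbit f o₂ := by
    intro p hp
    have h1 : MapClusterPt (Φ p) atTop (Φ ∘ (fun n : ℕ => (f ^ (n : ℤ)) o)) :=
      hp.continuousAt_comp hΦ.continuousAt
    have h2 : Φ ∘ (fun n : ℕ => (f ^ (n : ℤ)) o) = fun n : ℕ => (g ^ (n : ℤ)) y := by
      funext n; simp only [Function.comp_apply, hsc, hoy]
    rw [h2] at h1
    have h3 : Φ p ∈ fullOrbit g y₂ := hy ▸ h1
    obtain ⟨k, hk⟩ := h3
    have h4 : Φ ((f ^ (-k)) p) = y₂ := by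
      rw [hsc, ← hk]
      show (g ^ (-k) * g ^ k) y₂ = y₂
      rw [← zpow_add, neg_add_cancel, zpow_zero]; rfl
    have h5 : (f ^ (-k)) p = o₂ := by
      have : (f ^ (-k)) p ∈ Φ ⁻¹' {y₂} := h4
      rwa [hfiber] at this
    refine ⟨k, ?_⟩
    rw [← h5]
    show (f ^ k * f ^ (-k)) p = p
    rw [← zpow_add, add_neg_cancel, zpow_zero]; rfl
  -- omega limit set is nonempty
  have hne : (omegaLimSet f o).Nonempty := by
    obtain ⟨p, hp⟩ := exists_clusterPt_of_compactSpace
      (Filter.map (fun n : ℕ => (f ^ (n : ℤ)) o) atTop)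
    exact ⟨p, hp⟩
  obtain ⟨p₀, hp₀⟩ := hne
  obtain ⟨k₀, hk₀⟩ := hsub hp₀
  -- reverse inclusion
  have hsup : fullOrbit f o₂ ⊆ omegaLimSet f o := by
    rintro q ⟨m, rfl⟩
    have h1 : (f ^ (m - k₀)) p₀ ∈ omegaLimSet f o := hzstep (m - k₀) o p₀ hp₀
    have h2 : (f ^ (m - k₀)) p₀ = (f ^ m) o₂ := by
      rw [← hk₀]
      show (f ^ (m - k₀) * f ^ k₀) o₂ = (f ^ m) o₂
      rw [← zpow_add, sub_add_cancel]
    rwa [h2] at h1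
  exact Set.Subset.antisymm hsub hsup
end

section
/- Let φ be a local flow on a topological space X, W ⊂ X a Ważewski set, and define the escape-time function σ : W* → [0,∞) by σ(x) = sup{t ∈ [0,∞) : φ([0,t]×{x}) ⊂ W}, where W* = {x ∈ W : φ(t,x) ∉ W for some t > 0}. Then σ is continuous on W*. -/
/-- A local flow on a topological space `X`: a continuous map `φ` defined on an
open set `D ⊆ ℝ × X`, whose time-domains are intervals containing `0`, with the
usual identity and composition axioms. -/
structure LocalFlow (X : Type*) [TopologicalSpace X] where
  D : Set (ℝ × X)
  isOpen_D : IsOpen D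
  toFun : ℝ → X → X
  zero_mem : ∀ x : X, (0, x) ∈ D
  interval : ∀ x : X, Set.OrdConnected {t : ℝ | (t, x) ∈ D}
  map_zero : ∀ x : X, toFun 0 x = x
  comp : ∀ (x : X) (s t : ℝ), (s, x) ∈ D → (t, toFun s x) ∈ D →
    (s + t, x) ∈ D ∧ toFun (s + t) x = toFun t (toFun s x)
  continuousOn : ContinuousOn (fun p : ℝ × X => toFun p.1 p.2) D

/-- `φ([0,t] × {x}) ⊆ W` (in particular the flow is defined on `[0,t]`). -/
def LocalFlow.segIn {X : Type*} [TopologicalSpace X] (φ : LocalFlow X) (W : Set X)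
    (x : X) (t : ℝ) : Prop :=
  ∀ s ∈ Set.Icc (0 : ℝ) t, (s, x) ∈ φ.D ∧ φ.toFun s x ∈ W

/-- The exit set `W⁻`. -/
def LocalFlow.exitSet {X : Type*} [TopologicalSpace X] (φ : LocalFlow X) (W : Set X) : Set X :=
  {x ∈ W | ∀ t > (0 : ℝ), ¬ φ.segIn W x t}

/-- The set `W*` of eventually-escaping points. -/
def LocalFlow.escapeSet {X : Type*} [TopologicalSpace X] (φ : LocalFlow X) (W : Set X) : Set X :=
  {x ∈ W | ∃ t > (0 : ℝ), (t, x) ∈ φ.D ∧ φ.toFun t x ∉ W}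

/-- The escape-time function of `W`. -/
noncomputable def LocalFlow.escapeTime {X : Type*} [TopologicalSpace X]
    (φ : LocalFlow X) (W : Set X) (x : X) : ℝ :=
  sSup {t : ℝ | 0 ≤ t ∧ φ.segIn W x t}

namespace LocalFlow

variable {X : Type*} [TopologicalSpace X] (φ : LocalFlow X)

lemma domIcc {x : X} {t s : ℝ} (ht : (t, x) ∈ φ.D) (hs : s ∈ Set.Icc (0:ℝ) t) :
    (s, x) ∈ φ.D :=
  (φ.interval x).out (φ.zero_mem x) ht hs

lemma contAt {x : X} {t : ℝ} (ht : (t, x) ∈ φ.D) :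
    ContinuousAt (fun s => φ.toFun s x) t := by
  have h1 : ContinuousAt (fun p : ℝ × X => φ.toFun p.1 p.2) (t, x) :=
    φ.continuousOn.continuousAt (φ.isOpen_D.mem_nhds ht)
  have h2 : ContinuousAt (fun s : ℝ => ((s, x) : ℝ × X)) t :=
    continuousAt_id.prodMk continuousAt_const
  exact ContinuousAt.comp (f := fun s : ℝ => ((s, x) : ℝ × X)) (x := t) h1 h2

/-- Key extension lemma: the domain along an orbit persists. -/
lemma extend {x : X} {T : ℝ} (hT : ∀ u ∈ Set.Icc (0:ℝ) T, (u, x) ∈ φ.D)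
    {c u : ℝ} (hc : c ∈ Set.Icc (0:ℝ) T) (hu : u ∈ Set.Icc (0:ℝ) (T - c)) :
    (u, φ.toFun c x) ∈ φ.D := by
  by_contra hcon
  set y := φ.toFun c x with hy
  set E := {t : ℝ | 0 ≤ t ∧ (t, y) ∈ φ.D} with hE
  have hE0 : (0:ℝ) ∈ E := ⟨le_refl _, φ.zero_mem y⟩
  have hbd : ∀ t ∈ E, t ≤ u := by
    intro t ht
    by_contra h; push_neg at h
    exact hcon ((φ.interval y).out (φ.zero_mem y) ht.2 ⟨hu.1, le_of_lt h⟩)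
  have hEbdd : BddAbove E := ⟨u, hbd⟩
  set ρ := sSup E with hρ
  have hρ0 : 0 ≤ ρ := le_csSup hEbdd hE0
  have hρu : ρ ≤ u := csSup_le ⟨0, hE0⟩ hbd
  have hcρT : c + ρ ∈ Set.Icc (0:ℝ) T := ⟨by linarith [hc.1], by linarith [hu.2]⟩
  have hQD : (c + ρ, x) ∈ φ.D := hT _ hcρT
  set Q := φ.toFun (c + ρ) x with hQ
  -- pick δ > 0 with (δ, Q) ∈ D
  have hop : IsOpen {t : ℝ | (t, Q) ∈ φ.D} :=
    φ.isOpen_D.preimage (continuous_id.prodMk continuous_const)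
  obtain ⟨ε, hε0, hball⟩ := Metric.mem_nhds_iff.mp (hop.mem_nhds (φ.zero_mem Q))
  have hδ : (ε/2, Q) ∈ φ.D := by
    apply hball
    rw [Metric.mem_ball, Real.dist_eq, sub_zero, abs_of_pos (by positivity)]
    linarith
  set δ := ε/2 with hδdef
  have hδ0 : 0 < δ := by positivity
  -- continuity: (δ, φ c' x) ∈ D for c' near c + ρ
  have hcont : ContinuousAt (fun c' => ((δ, φ.toFun c' x) : ℝ × X)) (c + ρ) :=
    continuousAt_const.prodMk (φ.contAt hQD)
  have hnb : (fun c' => ((δ, φ.toFun c' x) : ℝ × X)) ⁻¹' φ.D ∈ nhds (c + ρ) :=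
    hcont.preimage_mem_nhds (φ.isOpen_D.mem_nhds hδ)
  obtain ⟨η, hη0, hηsub⟩ := Metric.mem_nhds_iff.mp hnb
  set m := min ρ (min η δ) with hm
  set β := ρ - m / 2 with hβ
  have hm0 : 0 ≤ m := le_min hρ0 (le_of_lt (lt_min hη0 hδ0))
  have hβ0 : 0 ≤ β := by
    have : m ≤ ρ := min_le_left _ _
    simp only [hβ]; linarith
  have hβρ : β ≤ ρ := by simp only [hβ]; linarith
  have hβD : (β, y) ∈ φ.D := by
    rcases eq_or_lt_of_le hρ0 with h0 | h0
    · have : β = 0 := by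
        have hm' : m = 0 := le_antisymm (by simpa [hm] using min_le_left ρ (min η δ) |>.trans_eq h0.symm) hm0
        simp [hβ, hm', ← h0]
      rw [this]; exact φ.zero_mem y
    · have hmpos : 0 < m := lt_min h0 (lt_min hη0 hδ0)
      have hβlt : β < ρ := by simp only [hβ]; linarith
      obtain ⟨t, htE, hβt⟩ := exists_lt_of_lt_csSup ⟨0, hE0⟩ hβlt
      exact (φ.interval y).out (φ.zero_mem y) htE.2 ⟨hβ0, le_of_lt hβt⟩
  have hcβmem : c + β ∈ Metric.ball (c + ρ) η := by
    simp only [Metric.mem_ball, Real.dist_eq]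
    have h1 : m / 2 < η := by
      have : m ≤ η := (min_le_right _ _).trans (min_le_left _ _)
      linarith
    have : c + β - (c + ρ) = -(m/2) := by simp only [hβ]; ring
    rw [this, abs_neg, abs_of_nonneg (by linarith)]
    linarith
  have hδφ : (δ, φ.toFun (c + β) x) ∈ φ.D := hηsub hcβmem
  have hcomp1 := φ.comp x c β (hT c hc) hβD
  rw [hcomp1.2] at hδφ
  have hcomp2 := φ.comp y β δ hβD hδφ
  have hmem : β + δ ∈ E := ⟨by linarith, hcomp2.1⟩
  have : β + δ ≤ ρ := le_csSup hEbdd hmem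
  have hmδ : m / 2 < δ := by
    have : m ≤ δ := (min_le_right _ _).trans (min_le_right _ _)
    linarith
  simp only [hβ] at this
  linarith

lemma extend_eq {x : X} {T : ℝ} (hT : ∀ u ∈ Set.Icc (0:ℝ) T, (u, x) ∈ φ.D)
    {c u : ℝ} (hc : c ∈ Set.Icc (0:ℝ) T) (hu : u ∈ Set.Icc (0:ℝ) (T - c)) :
    φ.toFun (c + u) x = φ.toFun u (φ.toFun c x) :=
  (φ.comp x c u (hT c hc) (φ.extend hT hc hu)).2

end LocalFlow

namespace LocalFlow

variable {X : Type*} [TopologicalSpace X] (φ : LocalFlow X) (W : Set X)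

lemma segIn_zero {x : X} (hx : x ∈ W) : φ.segIn W x 0 := by
  intro s hs
  have h0 : s = 0 := le_antisymm hs.2 hs.1
  subst h0
  exact ⟨φ.zero_mem x, by rw [φ.map_zero]; exact hx⟩

lemma S_nonempty {x : X} (hx : x ∈ W) :
    Set.Nonempty {t : ℝ | 0 ≤ t ∧ φ.segIn W x t} :=
  ⟨0, le_refl _, φ.segIn_zero W hx⟩

lemma S_bdd {x : X} {t₀ : ℝ} (h0 : 0 < t₀) (hW : φ.toFun t₀ x ∉ W) :
    ∀ t ∈ {t : ℝ | 0 ≤ t ∧ φ.segIn W x t}, t ≤ t₀ := by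
  intro t ht
  by_contra h; push_neg at h
  exact hW (ht.2 t₀ ⟨le_of_lt h0, le_of_lt h⟩).2

lemma escapeTime_nonneg {x : X} (hx : x ∈ φ.escapeSet W) : 0 ≤ φ.escapeTime W x := by
  obtain ⟨hxW, t₀, ht₀, ht₀D, ht₀W⟩ := hx
  exact le_csSup ⟨t₀, φ.S_bdd W ht₀ ht₀W⟩ ⟨le_refl _, φ.segIn_zero W hxW⟩

lemma escapeTime_segIn (hWaz1 : ∀ x ∈ W, ∀ t > (0 : ℝ),
      (∀ s ∈ Set.Icc (0 : ℝ) t, (s, x) ∈ φ.D ∧ φ.toFun s x ∈ closure W) →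
      φ.segIn W x t) {x : X} (hx : x ∈ φ.escapeSet W) :
    φ.segIn W x (φ.escapeTime W x) := by
  obtain ⟨hxW, t₀, ht₀, ht₀D, ht₀W⟩ := hx
  have hbdd : BddAbove {t : ℝ | 0 ≤ t ∧ φ.segIn W x t} := ⟨t₀, φ.S_bdd W ht₀ ht₀W⟩
  have hne := φ.S_nonempty W hxW
  set σ := φ.escapeTime W x with hσdef
  have hσ0 : 0 ≤ σ := le_csSup hbdd ⟨le_refl _, φ.segIn_zero W hxW⟩
  have hσt₀ : σ ≤ t₀ := csSup_le hne (φ.S_bdd W ht₀ ht₀W)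
  have hσD : (σ, x) ∈ φ.D := φ.domIcc ht₀D ⟨hσ0, hσt₀⟩
  have hlt : ∀ s, 0 ≤ s → s < σ → (s, x) ∈ φ.D ∧ φ.toFun s x ∈ W := by
    intro s h0 hs
    obtain ⟨t, htS, hst⟩ := exists_lt_of_lt_csSup hne hs
    exact htS.2 s ⟨h0, le_of_lt hst⟩
  rcases eq_or_lt_of_le hσ0 with h0 | h0
  · rw [← h0]; exact φ.segIn_zero W hxW
  · apply hWaz1 x hxW σ h0
    intro s hs
    refine ⟨φ.domIcc ht₀D ⟨hs.1, hs.2.trans hσt₀⟩, ?_⟩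
    rcases lt_or_eq_of_le hs.2 with h | h
    · exact subset_closure (hlt s hs.1 h).2
    · rw [h]
      have hcw : ContinuousWithinAt (fun u => φ.toFun u x) (Set.Ico 0 σ) σ :=
        (φ.contAt hσD).continuousWithinAt
      have hmem : σ ∈ closure (Set.Ico (0:ℝ) σ) := by
        rw [closure_Ico (ne_of_lt h0)]
        exact ⟨hσ0, le_refl _⟩
      have himg := hcw.mem_closure_image hmem
      refine closure_mono ?_ himg
      rintro _ ⟨u, hu, rfl⟩
      exact (hlt u hu.1 hu.2).2

lemma escapeTime_lt (hWaz1 : ∀ x ∈ W, ∀ t > (0 : ℝ),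
      (∀ s ∈ Set.Icc (0 : ℝ) t, (s, x) ∈ φ.D ∧ φ.toFun s x ∈ closure W) →
      φ.segIn W x t) {x : X} {t₀ : ℝ} (hx : x ∈ φ.escapeSet W) (h0 : 0 < t₀)
    (hW : φ.toFun t₀ x ∉ W) : φ.escapeTime W x < t₀ := by
  by_contra h; push_neg at h
  exact hW ((φ.escapeTime_segIn W hWaz1 hx) t₀ ⟨le_of_lt h0, h⟩).2

lemma exit_mem (hWaz1 : ∀ x ∈ W, ∀ t > (0 : ℝ),
      (∀ s ∈ Set.Icc (0 : ℝ) t, (s, x) ∈ φ.D ∧ φ.toFun s x ∈ closure W) →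
      φ.segIn W x t) {x : X} (hx : x ∈ φ.escapeSet W) :
    φ.toFun (φ.escapeTime W x) x ∈ φ.exitSet W := by
  have hseg := φ.escapeTime_segIn W hWaz1 hx
  obtain ⟨hxW, t₀, ht₀, ht₀D, ht₀W⟩ := hx
  have hbdd : BddAbove {t : ℝ | 0 ≤ t ∧ φ.segIn W x t} := ⟨t₀, φ.S_bdd W ht₀ ht₀W⟩
  set σ := φ.escapeTime W x with hσdef
  have hσ0 : 0 ≤ σ := le_csSup hbdd ⟨le_refl _, φ.segIn_zero W hxW⟩
  refine ⟨(hseg σ ⟨hσ0, le_refl _⟩).2, ?_⟩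
  intro t ht htseg
  have hS : σ + t ∈ {t : ℝ | 0 ≤ t ∧ φ.segIn W x t} := by
    refine ⟨by linarith, ?_⟩
    intro s hs
    rcases le_or_gt s σ with h | h
    · exact hseg s ⟨hs.1, h⟩
    · have hσD : (σ, x) ∈ φ.D := (hseg σ ⟨hσ0, le_refl _⟩).1
      have hmem2 : s - σ ∈ Set.Icc (0:ℝ) t := ⟨by linarith, by linarith [hs.2]⟩
      have hyD : (s - σ, φ.toFun σ x) ∈ φ.D := (htseg (s - σ) hmem2).1
      have hcomp := φ.comp x σ (s - σ) hσD hyD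
      have hs' : σ + (s - σ) = s := by ring
      rw [hs'] at hcomp
      exact ⟨hcomp.1, by rw [hcomp.2]; exact (htseg (s - σ) hmem2).2⟩
  have hle : σ + t ≤ σ := le_csSup hbdd hS
  linarith

end LocalFlow

theorem stmt_13 {X : Type*} [TopologicalSpace X] (φ : LocalFlow X) (W : Set X)
    (hWaz1 : ∀ x ∈ W, ∀ t > (0 : ℝ),
      (∀ s ∈ Set.Icc (0 : ℝ) t, (s, x) ∈ φ.D ∧ φ.toFun s x ∈ closure W) →
      φ.segIn W x t)
    (hWaz2 : closure (φ.exitSet W) ∩ φ.escapeSet W ⊆ φ.exitSet W) :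
    ContinuousOn (φ.escapeTime W) (φ.escapeSet W) := by
  intro x₀ hx₀
  have hx₀' := hx₀
  obtain ⟨hx₀W, t₀, ht₀, ht₀D, ht₀W⟩ := hx₀'
  have hσ₀seg : φ.segIn W x₀ (φ.escapeTime W x₀) := φ.escapeTime_segIn W hWaz1 hx₀
  have hbdd₀ : BddAbove {t : ℝ | 0 ≤ t ∧ φ.segIn W x₀ t} := ⟨t₀, φ.S_bdd W ht₀ ht₀W⟩
  set σ₀ := φ.escapeTime W x₀ with hσ₀def
  have hσ₀0 : 0 ≤ σ₀ := φ.escapeTime_nonneg W hx₀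
  have hσ₀t₀ : σ₀ < t₀ := φ.escapeTime_lt W hWaz1 hx₀ ht₀ ht₀W
  have key : ∀ ε > (0:ℝ), ∀ᶠ x in nhdsWithin x₀ (φ.escapeSet W),
      dist (φ.escapeTime W x) σ₀ < ε := by
    intro ε hε
    have hUSC : ∀ᶠ x in nhdsWithin x₀ (φ.escapeSet W), φ.escapeTime W x < σ₀ + ε := by
      set t₁ := min (σ₀ + ε/2) ((σ₀ + t₀)/2) with ht₁def
      have ht₁σ : σ₀ < t₁ := lt_min (by linarith) (by linarith)
      have ht₁t₀ : t₁ < t₀ := lt_of_le_of_lt (min_le_right _ _) (by linarith)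
      have ht₁ε : t₁ < σ₀ + ε := lt_of_le_of_lt (min_le_left _ _) (by linarith)
      have ht₁0 : 0 < t₁ := lt_of_le_of_lt hσ₀0 ht₁σ
      have hnoseg : ¬ φ.segIn W x₀ t₁ := by
        intro h
        have : t₁ ≤ σ₀ := le_csSup hbdd₀ ⟨le_of_lt ht₁0, h⟩
        linarith
      have hfail : ¬ (∀ s ∈ Set.Icc (0:ℝ) t₁, (s, x₀) ∈ φ.D ∧ φ.toFun s x₀ ∈ closure W) :=
        fun h => hnoseg (hWaz1 x₀ hx₀W t₁ ht₁0 h)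
      push_neg at hfail
      obtain ⟨s₁, hs₁mem, hs₁⟩ := hfail
      have hs₁D : (s₁, x₀) ∈ φ.D :=
        φ.domIcc ht₀D ⟨hs₁mem.1, hs₁mem.2.trans (le_of_lt ht₁t₀)⟩
      have hs₁W : φ.toFun s₁ x₀ ∉ closure W := hs₁ hs₁D
      set U := {x : X | (s₁, x) ∈ φ.D} ∩ (fun x => φ.toFun s₁ x) ⁻¹' (closure W)ᶜ with hUdef
      have hUopen : IsOpen U := by
        have hbase : IsOpen {x : X | (s₁, x) ∈ φ.D} :=
          φ.isOpen_D.preimage (continuous_const.prodMk continuous_id)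
        have hcont : ContinuousOn (fun x => φ.toFun s₁ x) {x : X | (s₁, x) ∈ φ.D} := by
          apply ContinuousOn.comp φ.continuousOn
            ((continuous_const.prodMk continuous_id).continuousOn)
          intro x hx; exact hx
        exact hcont.isOpen_inter_preimage hbase (isOpen_compl_iff.mpr isClosed_closure)
      have hx₀U : x₀ ∈ U := ⟨hs₁D, hs₁W⟩
      have hUnhds : U ∈ nhdsWithin x₀ (φ.escapeSet W) :=
        mem_nhdsWithin_of_mem_nhds (hUopen.mem_nhds hx₀U)
      filter_upwards [hUnhds, self_mem_nhdsWithin] with x hxU hxE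
      have hle : φ.escapeTime W x ≤ s₁ := by
        apply csSup_le (φ.S_nonempty W hxE.1)
        intro t ht
        by_contra h; push_neg at h
        exact hxU.2 (subset_closure (ht.2 s₁ ⟨hs₁mem.1, le_of_lt h⟩).2)
      calc φ.escapeTime W x ≤ s₁ := hle
        _ ≤ t₁ := hs₁mem.2
        _ < σ₀ + ε := ht₁ε
    have hLSC : ∀ᶠ x in nhdsWithin x₀ (φ.escapeSet W), σ₀ - ε < φ.escapeTime W x := by
      rcases lt_or_ge σ₀ ε with hcase | hcase
      · filter_upwards [self_mem_nhdsWithin] with x hxE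
        have h0 := φ.escapeTime_nonneg W hxE
        linarith
      · by_contra hcon
        have hfreq : ∃ᶠ x in nhdsWithin x₀ (φ.escapeSet W),
            φ.escapeTime W x ≤ σ₀ - ε := by
          rw [Filter.not_eventually] at hcon
          exact hcon.mono (fun x h => le_of_not_gt h)
        have hτ : ∃ τ ∈ Set.Icc (0:ℝ) (σ₀ - ε),
            φ.toFun τ x₀ ∈ closure (φ.exitSet W) := by
          by_contra hno; push_neg at hno
          have hNopen : IsOpen (φ.D ∩
              (fun p : ℝ × X => φ.toFun p.1 p.2) ⁻¹' (closure (φ.exitSet W))ᶜ) :=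
            φ.continuousOn.isOpen_inter_preimage φ.isOpen_D
              (isOpen_compl_iff.mpr isClosed_closure)
          have hsub : Set.Icc (0:ℝ) (σ₀ - ε) ×ˢ ({x₀} : Set X) ⊆ φ.D ∩
              (fun p : ℝ × X => φ.toFun p.1 p.2) ⁻¹' (closure (φ.exitSet W))ᶜ := by
            rintro ⟨τ, x⟩ ⟨hτm, hxm⟩
            rw [Set.mem_singleton_iff] at hxm; subst hxm
            exact ⟨φ.domIcc ht₀D ⟨hτm.1, by linarith [hτm.2]⟩, hno τ hτm⟩
          obtain ⟨u, v, hu, hv, hJu, hxv, huv⟩ :=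
            generalized_tube_lemma isCompact_Icc isCompact_singleton hNopen hsub
          have hvnhds : v ∈ nhdsWithin x₀ (φ.escapeSet W) :=
            mem_nhdsWithin_of_mem_nhds (hv.mem_nhds (hxv rfl))
          have hev : ∀ᶠ x in nhdsWithin x₀ (φ.escapeSet W), x ∈ v ∩ φ.escapeSet W :=
            Filter.inter_mem hvnhds self_mem_nhdsWithin
          obtain ⟨x, hxσ, hxv', hxE⟩ := (hfreq.and_eventually hev).exists
          have hy := φ.exit_mem W hWaz1 hxE
          have hmem : (φ.escapeTime W x, x) ∈ u ×ˢ v :=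
            ⟨hJu ⟨φ.escapeTime_nonneg W hxE, hxσ⟩, hxv'⟩
          exact (huv hmem).2 (subset_closure hy)
        obtain ⟨τ, hτm, hτC⟩ := hτ
        have hτσ₀ : τ ≤ σ₀ := by linarith [hτm.2]
        have hτt₀ : τ ≤ t₀ := by linarith
        have hT : ∀ u ∈ Set.Icc (0:ℝ) t₀, (u, x₀) ∈ φ.D := fun u hu => φ.domIcc ht₀D hu
        have hτmem : τ ∈ Set.Icc (0:ℝ) t₀ := ⟨hτm.1, hτt₀⟩
        have hzD : (t₀ - τ, φ.toFun τ x₀) ∈ φ.D :=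
          φ.extend hT hτmem ⟨by linarith, le_refl _⟩
        have hzEq := φ.extend_eq hT hτmem ⟨(by linarith : (0:ℝ) ≤ t₀ - τ), le_refl _⟩
        rw [show τ + (t₀ - τ) = t₀ by ring] at hzEq
        have hzW : φ.toFun τ x₀ ∈ W := (hσ₀seg τ ⟨hτm.1, hτσ₀⟩).2
        have hzE : φ.toFun τ x₀ ∈ φ.escapeSet W :=
          ⟨hzW, t₀ - τ, by linarith [hτm.2], hzD, by rw [← hzEq]; exact ht₀W⟩
        have hzexit := hWaz2 ⟨hτC, hzE⟩
        apply hzexit.2 (σ₀ - τ) (by linarith [hτm.2])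
        intro s hs
        have hsm : s ∈ Set.Icc (0:ℝ) (t₀ - τ) := ⟨hs.1, by linarith [hs.2]⟩
        refine ⟨φ.extend hT hτmem hsm, ?_⟩
        have heq := φ.extend_eq hT hτmem hsm
        rw [← heq]
        exact (hσ₀seg (τ + s) ⟨by linarith [hτm.1, hs.1], by linarith [hs.2]⟩).2
    filter_upwards [hUSC, hLSC] with x h1 h2
    rw [Real.dist_eq, abs_sub_lt_iff]
    constructor <;> linarith
  exact Metric.tendsto_nhds.mpr key
end

section
/- Let R ≥ 100 and β = 0.01. For every t ∈ ℝ and every a ∈ ℂ with Re a ∈ (0, (11/10)β] and |Im a| ≤ tan(β)·Re a, the vector field û(t,a) = −2R ā − R e^{it/2} ā² + (1/2)a satisfies Re[û(t,a)] ≤ Re[a]·(−2R + R·Re[a]·(1+tan²β) + (1/2)√(1+tan²β)) < 0. -/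
open Complex

theorem stmt_16 (R β : ℝ) (hR : R ≥ 100) (hβ : β = 0.01) (t : ℝ) (a : ℂ)
    (hre : a.re ∈ Set.Ioc (0 : ℝ) ((11 / 10) * β))
    (him : |a.im| ≤ Real.tan β * a.re) :
    (-2 * (R : ℂ) * (starRingEnd ℂ) a
        - (R : ℂ) * Complex.exp (Complex.I * t / 2) * (starRingEnd ℂ) a ^ 2
        + 1 / 2 * a).re
      ≤ a.re * (-2 * R + R * a.re * (1 + Real.tan β ^ 2)
          + (1 / 2) * Real.sqrt (1 + Real.tan β ^ 2))
    ∧ a.re * (-2 * R + R * a.re * (1 + Real.tan β ^ 2)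
          + (1 / 2) * Real.sqrt (1 + Real.tan β ^ 2)) < 0 := by
  obtain ⟨hx0, hx1⟩ := hre
  set x := a.re with hxdef
  set y := a.im with hydef
  set T := Real.tan β with hTdef
  have hR0 : (0:ℝ) < R := by linarith
  -- bounds on T
  have hT0 : 0 ≤ T := by
    rw [hTdef, hβ]
    apply Real.tan_nonneg_of_nonneg_of_le_pi_div_two (by norm_num)
    linarith [Real.pi_gt_three]
  have hT1 : T < 1 := by
    rw [hTdef, hβ]
    have : Real.tan 0.01 < Real.tan (Real.pi / 4) := by
      apply Real.tan_lt_tan_of_nonneg_of_lt_pi_div_two (by norm_num)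
      · linarith [Real.pi_gt_three]
      · linarith [Real.pi_gt_three]
    simpa [Real.tan_pi_div_four] using this
  have hy2 : y ^ 2 ≤ T ^ 2 * x ^ 2 := by
    have := pow_le_pow_left₀ (abs_nonneg y) him 2
    calc y ^ 2 = |y| ^ 2 := (_root_.sq_abs y).symm
      _ ≤ (T * x) ^ 2 := this
      _ = T ^ 2 * x ^ 2 := by ring
  -- sqrt bounds
  have hs1 : (1:ℝ) ≤ Real.sqrt (1 + T ^ 2) := by
    nth_rewrite 1 [show (1:ℝ) = Real.sqrt 1 from (Real.sqrt_one).symm]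
    exact Real.sqrt_le_sqrt (by nlinarith)
  have hs2 : Real.sqrt (1 + T ^ 2) ≤ 2 := by
    have h2 : (1:ℝ) + T ^ 2 ≤ 4 := by nlinarith
    calc Real.sqrt (1 + T ^ 2) ≤ Real.sqrt 4 := Real.sqrt_le_sqrt h2
      _ = 2 := by rw [show (4:ℝ) = 2 ^ 2 by norm_num, Real.sqrt_sq (by norm_num)]
  -- the middle quadratic term
  have hc : ‖Complex.exp (Complex.I * t / 2)‖ = 1 := by
    rw [Complex.norm_exp]
    simp
  have habs2 : ‖(starRingEnd ℂ) a‖ ^ 2 = x ^ 2 + y ^ 2 := by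
    rw [Complex.sq_norm]
    simp [Complex.normSq_apply, hxdef, hydef]
    ring
  have hmid : (-((R : ℂ) * Complex.exp (Complex.I * t / 2) * (starRingEnd ℂ) a ^ 2)).re
      ≤ R * (x ^ 2 + y ^ 2) := by
    calc (-((R : ℂ) * Complex.exp (Complex.I * t / 2) * (starRingEnd ℂ) a ^ 2)).re
        ≤ ‖-((R : ℂ) * Complex.exp (Complex.I * t / 2) * (starRingEnd ℂ) a ^ 2)‖ :=
          Complex.re_le_norm _
      _ = R * (x ^ 2 + y ^ 2) := by
          rw [norm_neg, norm_mul, norm_mul, norm_pow, hc, habs2,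
            Complex.norm_real, Real.norm_eq_abs, abs_of_pos hR0]
          ring
  have hrest : (-2 * (R : ℂ) * (starRingEnd ℂ) a
        - (R : ℂ) * Complex.exp (Complex.I * t / 2) * (starRingEnd ℂ) a ^ 2
        + 1 / 2 * a).re
      = -2 * R * x + (-((R : ℂ) * Complex.exp (Complex.I * t / 2) * (starRingEnd ℂ) a ^ 2)).re
        + x / 2 := by
    simp [sub_eq_add_neg]
    ring
  have hx1' : x ≤ 0.011 := by rw [hβ] at hx1; linarith
  constructor
  · rw [hrest]
    have h1 : (-((R : ℂ) * Complex.exp (Complex.I * t / 2) * (starRingEnd ℂ) a ^ 2)).re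
        ≤ R * x ^ 2 * (1 + T ^ 2) := by nlinarith
    nlinarith [mul_le_mul_of_nonneg_left hs1 (le_of_lt (half_pos hx0))]
  · have hT2 : T ^ 2 ≤ 1 := by nlinarith
    have hRx : R * x * (1 + T ^ 2) ≤ 0.022 * R := by
      nlinarith [mul_nonneg (mul_nonneg hR0.le hx0.le) (sub_nonneg.2 hT2),
        mul_le_mul_of_nonneg_left hx1' hR0.le]
    have : -2 * R + R * x * (1 + T ^ 2) + (1 / 2) * Real.sqrt (1 + T ^ 2) < 0 := by
      linarith
    exact mul_neg_of_pos_of_neg hx0 this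
end

section
/- Let K = [α,β] × [γ,δ] ⊂ ℝ², and let a continuous time-dependent vector field v(t,x,y) = (v₁, v₂) generate a local process φ on ℝ². Assume for all t ∈ ℝ: v₁ < 0 on the left edge K₁ = {x = α}, v₁ > 0 on the right edge K₂ = {x = β}, v₂ > 0 on the bottom edge K₃ = {y = γ}, and v₂ < 0 on the top edge K₄ = {y = δ}. Let ξ : [ζ,η] → K be a continuous curve with ξ(ζ) ∈ K₁ and ξ(η) ∈ K₂, and let a < b be real. Then there exist μ, ν with ζ < μ < ν < η such that φ_{(a,t)}(ξ(p)) ∈ K for all t ∈ [0, b−a] and p ∈ [μ,ν], φ_{(a,b−a)}(ξ(μ)) ∈ K₁, and φ_{(a,b−a)}(ξ(ν)) ∈ K₂. -/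
open Filter Topology Set

theorem aux_slope_lt {f : ℝ → ℝ} {d t₀ : ℝ} (hf : HasDerivAt f d t₀) (hd : d < 0) :
    ∀ᶠ s in 𝓝[>] t₀, f s < f t₀ := by
  have h := hasDerivAt_iff_tendsto_slope.1 hf
  have h2 : ∀ᶠ s in 𝓝[≠] t₀, slope f t₀ s < 0 := h.eventually_lt_const hd
  have h3 : 𝓝[>] t₀ ≤ 𝓝[≠] t₀ := nhdsWithin_mono t₀ fun s hs => ne_of_gt hs
  filter_upwards [h3 h2, self_mem_nhdsWithin] with s hs hs'
  have h4 : (f s - f t₀) / (s - t₀) < 0 := by rwa [slope_def_field] at hs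
  have hpos : 0 < s - t₀ := sub_pos.2 hs'
  rcases div_neg_iff.1 h4 with ⟨h5, h6⟩ | ⟨h5, h6⟩ <;> linarith

theorem aux_slope_gt {f : ℝ → ℝ} {d t₀ : ℝ} (hf : HasDerivAt f d t₀) (hd : 0 < d) :
    ∀ᶠ s in 𝓝[>] t₀, f t₀ < f s := by
  have h := hasDerivAt_iff_tendsto_slope.1 hf
  have h2 : ∀ᶠ s in 𝓝[≠] t₀, 0 < slope f t₀ s := h.eventually_const_lt hd
  have h3 : 𝓝[>] t₀ ≤ 𝓝[≠] t₀ := nhdsWithin_mono t₀ fun s hs => ne_of_gt hs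
  filter_upwards [h3 h2, self_mem_nhdsWithin] with s hs hs'
  have h4 : 0 < (f s - f t₀) / (s - t₀) := by rwa [slope_def_field] at hs
  have hpos : 0 < s - t₀ := sub_pos.2 hs'
  rcases div_pos_iff.1 h4 with ⟨h5, h6⟩ | ⟨h5, h6⟩ <;> linarith

theorem stmt_17 (α β γ δ ζ η a b : ℝ)
    (hαβ : α < β) (hγδ : γ < δ) (hζη : ζ < η) (hab : a < b)
    (v : ℝ → ℝ × ℝ → ℝ × ℝ) (hv : Continuous (fun p : ℝ × (ℝ × ℝ) => v p.1 p.2))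
    -- `φ τ z t` is the value at time `τ + t` of the solution with value `z` at time `τ`
    (φ : ℝ → (ℝ × ℝ) → ℝ → ℝ × ℝ)
    (hφ0 : ∀ (τ : ℝ) (z : ℝ × ℝ), φ τ z 0 = z)
    (hφderiv : ∀ (τ : ℝ) (z : ℝ × ℝ) (t : ℝ),
      HasDerivAt (φ τ z) (v (τ + t) (φ τ z t)) t)
    (hφcont : Continuous (fun p : ℝ × (ℝ × ℝ) × ℝ => φ p.1 p.2.1 p.2.2))
    -- edge sign conditions on the rectangle `K = [α,β] × [γ,δ]`
    (hK1 : ∀ (t : ℝ) (y : ℝ), y ∈ Set.Icc γ δ → (v t (α, y)).1 < 0)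
    (hK2 : ∀ (t : ℝ) (y : ℝ), y ∈ Set.Icc γ δ → (v t (β, y)).1 > 0)
    (hK3 : ∀ (t : ℝ) (x : ℝ), x ∈ Set.Icc α β → (v t (x, γ)).2 > 0)
    (hK4 : ∀ (t : ℝ) (x : ℝ), x ∈ Set.Icc α β → (v t (x, δ)).2 < 0)
    (ξ : ℝ → ℝ × ℝ) (hξ : ContinuousOn ξ (Set.Icc ζ η))
    (hξK : ∀ p ∈ Set.Icc ζ η, ξ p ∈ Set.Icc α β ×ˢ Set.Icc γ δ)
    (hξζ : (ξ ζ).1 = α) (hξη : (ξ η).1 = β) :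
    ∃ μ ν : ℝ, ζ < μ ∧ μ < ν ∧ ν < η ∧
      (∀ t ∈ Set.Icc (0 : ℝ) (b - a), ∀ p ∈ Set.Icc μ ν,
        φ a (ξ p) t ∈ Set.Icc α β ×ˢ Set.Icc γ δ) ∧
      (φ a (ξ μ) (b - a)).1 = α ∧ (φ a (ξ ν) (b - a)).1 = β := by
  have hT : (0:ℝ) < b - a := sub_pos.2 hab
  set K : Set (ℝ × ℝ) := Set.Icc α β ×ˢ Set.Icc γ δ with hKdef
  have hKcl : IsClosed K := isClosed_Icc.prod isClosed_Icc
  -- continuity of a single trajectory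
  have htraj : ∀ z : ℝ × ℝ, Continuous (φ a z) := fun z =>
    hφcont.comp (continuous_const.prodMk (continuous_const.prodMk continuous_id))
  -- coordinate derivatives
  have hd1 : ∀ (z : ℝ × ℝ) (t : ℝ),
      HasDerivAt (fun s => (φ a z s).1) (v (a + t) (φ a z t)).1 t := fun z t => (hφderiv a z t).fst
  have hd2 : ∀ (z : ℝ × ℝ) (t : ℝ),
      HasDerivAt (fun s => (φ a z s).2) (v (a + t) (φ a z t)).2 t := fun z t => (hφderiv a z t).snd
  -- exit through the left edge
  have hExitL : ∀ (z : ℝ × ℝ) (t₀ : ℝ), φ a z t₀ ∈ K → (φ a z t₀).1 = α →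
      ∀ᶠ s in 𝓝[>] t₀, (φ a z s).1 < α := by
    intro z t₀ hmem hx
    have hv1 : (v (a + t₀) (φ a z t₀)).1 < 0 := by
      have h := hK1 (a + t₀) (φ a z t₀).2 hmem.2
      rwa [show ((α, (φ a z t₀).2) : ℝ × ℝ) = φ a z t₀ by rw [← hx]] at h
    have h := aux_slope_lt (hd1 z t₀) hv1
    simpa [hx] using h
  have hExitR : ∀ (z : ℝ × ℝ) (t₀ : ℝ), φ a z t₀ ∈ K → (φ a z t₀).1 = β →
      ∀ᶠ s in 𝓝[>] t₀, β < (φ a z s).1 := by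
    intro z t₀ hmem hx
    have hv1 : 0 < (v (a + t₀) (φ a z t₀)).1 := by
      have h := hK2 (a + t₀) (φ a z t₀).2 hmem.2
      rwa [show ((β, (φ a z t₀).2) : ℝ × ℝ) = φ a z t₀ by rw [← hx]] at h
    have h := aux_slope_gt (hd1 z t₀) hv1
    simpa [hx] using h
  -- local forward invariance away from the vertical edges
  have hInv : ∀ (z : ℝ × ℝ) (t₀ : ℝ), φ a z t₀ ∈ K → α < (φ a z t₀).1 → (φ a z t₀).1 < β →
      ∀ᶠ s in 𝓝[>] t₀, φ a z s ∈ K := by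
    intro z t₀ hmem hxα hxβ
    have hc1 : Continuous fun s => (φ a z s).1 := continuous_fst.comp (htraj z)
    have hc2 : Continuous fun s => (φ a z s).2 := continuous_snd.comp (htraj z)
    have hxev : ∀ᶠ s in 𝓝 t₀, (φ a z s).1 ∈ Set.Icc α β := by
      filter_upwards [hc1.continuousAt.eventually_mem (Ioo_mem_nhds hxα hxβ)] with s hs
      exact Ioo_subset_Icc_self hs
    have hyev : ∀ᶠ s in 𝓝[>] t₀, (φ a z s).2 ∈ Set.Icc γ δ := by
      rcases eq_or_lt_of_le hmem.2.1 with hγ | hγ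
      · -- on the bottom edge: y strictly increases
        have hv2 : 0 < (v (a + t₀) (φ a z t₀)).2 := by
          have h := hK3 (a + t₀) (φ a z t₀).1 hmem.1
          rwa [show (((φ a z t₀).1, γ) : ℝ × ℝ) = φ a z t₀ by rw [hγ]] at h
        have h1 := aux_slope_gt (hd2 z t₀) hv2
        have h2 : ∀ᶠ s in 𝓝 t₀, (φ a z s).2 < δ :=
          hc2.continuousAt.eventually_mem (Iio_mem_nhds (hγ ▸ hγδ))
        filter_upwards [h1, nhdsWithin_le_nhds h2] with s hs1 hs2
        exact ⟨le_of_lt (hγ ▸ hs1), le_of_lt hs2⟩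
      rcases eq_or_lt_of_le hmem.2.2 with hδ | hδ
      · -- on the top edge: y strictly decreases
        have hv2 : (v (a + t₀) (φ a z t₀)).2 < 0 := by
          have h := hK4 (a + t₀) (φ a z t₀).1 hmem.1
          rwa [show (((φ a z t₀).1, δ) : ℝ × ℝ) = φ a z t₀ by rw [← hδ]] at h
        have h1 := aux_slope_lt (hd2 z t₀) hv2
        have h2 : ∀ᶠ s in 𝓝 t₀, γ < (φ a z s).2 :=
          hc2.continuousAt.eventually_mem (Ioi_mem_nhds (hδ ▸ hγδ))
        filter_upwards [h1, nhdsWithin_le_nhds h2] with s hs1 hs2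
        exact ⟨le_of_lt hs2, le_of_lt (hδ ▸ hs1)⟩
      · have h2 : ∀ᶠ s in 𝓝 t₀, (φ a z s).2 ∈ Set.Ioo γ δ :=
          hc2.continuousAt.eventually_mem (Ioo_mem_nhds hγ hδ)
        filter_upwards [nhdsWithin_le_nhds h2] with s hs
        exact Ioo_subset_Icc_self hs
    filter_upwards [nhdsWithin_le_nhds hxev, hyev] with s h1 h2
    exact Set.mem_prod.2 ⟨h1, h2⟩
  -- a trajectory that stays in `K` up to `t₁` cannot touch a vertical edge before `t₁`
  have hNoTouch : ∀ (z : ℝ × ℝ) (t₀ t₁ : ℝ), 0 ≤ t₀ → t₀ < t₁ →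
      (∀ s ∈ Set.Icc 0 t₁, φ a z s ∈ K) → (φ a z t₀).1 ≠ α ∧ (φ a z t₀).1 ≠ β := by
    intro z t₀ t₁ ht₀ hlt hstay
    have hmem : φ a z t₀ ∈ K := hstay t₀ ⟨ht₀, hlt.le⟩
    have h2 : ∀ᶠ s in 𝓝[>] t₀, s < t₁ := nhdsWithin_le_nhds (Iio_mem_nhds hlt)
    have h3 : ∀ᶠ s in 𝓝[>] t₀, s ∈ Set.Ioi t₀ := eventually_mem_nhdsWithin
    constructor
    · intro hx
      obtain ⟨s, hs1, hs2, hs3⟩ := ((hExitL z t₀ hmem hx).and (h2.and h3)).exists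
      exact absurd (hstay s ⟨le_trans ht₀ (le_of_lt hs3), le_of_lt hs2⟩).1.1 (not_le.2 hs1)
    · intro hx
      obtain ⟨s, hs1, hs2, hs3⟩ := ((hExitR z t₀ hmem hx).and (h2.and h3)).exists
      exact absurd (hstay s ⟨le_trans ht₀ (le_of_lt hs3), le_of_lt hs2⟩).1.2 (not_le.2 hs1)
  -- rescaling of the stay condition
  have hscale : ∀ (P : ℝ → Prop) (t : ℝ), 0 ≤ t →
      ((∀ s ∈ Set.Icc (0:ℝ) 1, P (s * t)) ↔ ∀ u ∈ Set.Icc 0 t, P u) := by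
    intro P t ht
    constructor
    · intro h u hu
      rcases eq_or_lt_of_le ht with ht0 | ht0
      · have hu0 : u = 0 := le_antisymm (hu.2.trans ht0.symm.le) hu.1
        have := h 0 ⟨le_refl 0, zero_le_one⟩
        simpa [hu0] using this
      · have := h (u / t) ⟨div_nonneg hu.1 ht, div_le_one_of_le₀ hu.2 ht⟩
        rwa [div_mul_cancel₀ u (ne_of_gt ht0)] at this
    · intro h s hs
      exact h (s * t) ⟨mul_nonneg hs.1 ht, (mul_le_of_le_one_left ht hs.2)⟩
  -- joint continuity on the relevant set
  have hcontst : ∀ g : ℝ × ℝ → ℝ, Continuous g →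
      ContinuousOn (fun q : ℝ × ℝ => φ a (ξ q.1) (g q))
        (Set.Icc ζ η ×ˢ (Set.univ : Set ℝ)) := by
    intro g hg
    have h1 : ContinuousOn (fun q : ℝ × ℝ => ((a, (ξ q.1, g q)) : ℝ × (ℝ × ℝ) × ℝ))
        (Set.Icc ζ η ×ˢ (Set.univ : Set ℝ)) :=
      continuousOn_const.prodMk
        ((hξ.comp continuous_fst.continuousOn fun q hq => hq.1).prodMk hg.continuousOn)
    exact hφcont.comp_continuousOn h1
  have hclpre : ∀ (g : ℝ × ℝ → ℝ) (E : Set (ℝ × ℝ)), Continuous g → IsClosed E →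
      IsClosed ((Set.Icc ζ η ×ˢ (Set.univ : Set ℝ)) ∩
        (fun q : ℝ × ℝ => φ a (ξ q.1) (g q)) ⁻¹' E) :=
    fun g E hg hE => (hcontst g hg).preimage_isClosed_of_isClosed
      (isClosed_Icc.prod isClosed_univ) hE
  -- the sets of parameters whose trajectories reach the left (resp. right) edge
  set A : Set ℝ := {p | p ∈ Set.Icc ζ η ∧ ∃ t ∈ Set.Icc (0:ℝ) (b - a),
      (∀ s ∈ Set.Icc 0 t, φ a (ξ p) s ∈ K) ∧ (φ a (ξ p) t).1 = α} with hAdef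
  set B : Set ℝ := {p | p ∈ Set.Icc ζ η ∧ ∃ t ∈ Set.Icc (0:ℝ) (b - a),
      (∀ s ∈ Set.Icc 0 t, φ a (ξ p) s ∈ K) ∧ (φ a (ξ p) t).1 = β} with hBdef
  have hζA : ζ ∈ A := by
    refine ⟨⟨le_refl ζ, hζη.le⟩, 0, ⟨le_refl 0, hT.le⟩, ?_, ?_⟩
    · intro s hs
      have : s = 0 := le_antisymm hs.2 hs.1
      rw [this, hφ0]
      exact hξK ζ ⟨le_refl ζ, hζη.le⟩
    · rw [hφ0]; exact hξζ
  have hηB : η ∈ B := by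
    refine ⟨⟨hζη.le, le_refl η⟩, 0, ⟨le_refl 0, hT.le⟩, ?_, ?_⟩
    · intro s hs
      have : s = 0 := le_antisymm hs.2 hs.1
      rw [this, hφ0]
      exact hξK η ⟨hζη.le, le_refl η⟩
    · rw [hφ0]; exact hξη
  -- closedness of A and B via a compact-projection argument
  have hclosedAB : ∀ c : ℝ, IsClosed {p | p ∈ Set.Icc ζ η ∧ ∃ t ∈ Set.Icc (0:ℝ) (b - a),
      (∀ s ∈ Set.Icc 0 t, φ a (ξ p) s ∈ K) ∧ (φ a (ξ p) t).1 = c} := by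
    intro c
    set C : Set (ℝ × ℝ) := (Set.Icc ζ η ×ˢ Set.Icc (0:ℝ) (b - a)) ∩
      ((⋂ s ∈ Set.Icc (0:ℝ) 1, (Set.Icc ζ η ×ˢ (Set.univ : Set ℝ)) ∩
        (fun q : ℝ × ℝ => φ a (ξ q.1) (s * q.2)) ⁻¹' K) ∩
       ((Set.Icc ζ η ×ˢ (Set.univ : Set ℝ)) ∩
        (fun q : ℝ × ℝ => φ a (ξ q.1) q.2) ⁻¹' {z : ℝ × ℝ | z.1 = c})) with hCdef
    have hCcl : IsClosed C := by
      apply IsClosed.inter (isClosed_Icc.prod isClosed_Icc)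
      apply IsClosed.inter
      · exact isClosed_biInter fun s _ => hclpre _ _ (continuous_const.mul continuous_snd) hKcl
      · exact hclpre _ _ continuous_snd (isClosed_eq continuous_fst continuous_const)
    have hCcpt : IsCompact C := (isCompact_Icc.prod isCompact_Icc).of_isClosed_subset hCcl
      fun q hq => hq.1
    have himg : {p | p ∈ Set.Icc ζ η ∧ ∃ t ∈ Set.Icc (0:ℝ) (b - a),
        (∀ s ∈ Set.Icc 0 t, φ a (ξ p) s ∈ K) ∧ (φ a (ξ p) t).1 = c} = Prod.fst '' C := by
      ext p
      constructor
      · rintro ⟨hp, t, ht, hstay, hc⟩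
        refine ⟨(p, t), ⟨⟨hp, ht⟩, ?_, ⟨hp, Set.mem_univ _⟩, hc⟩, rfl⟩
        refine Set.mem_biInter fun s hs => ⟨⟨hp, Set.mem_univ _⟩, ?_⟩
        exact hstay (s * t) ⟨mul_nonneg hs.1 ht.1, mul_le_of_le_one_left ht.1 hs.2⟩
      · rintro ⟨⟨p', t⟩, ⟨⟨hp, ht⟩, hstay, ⟨_, hc⟩⟩, rfl⟩
        refine ⟨hp, t, ht, ?_, hc⟩
        refine (hscale (fun u => φ a (ξ p') u ∈ K) t ht.1).1 fun s hs => ?_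
        exact (Set.mem_iInter₂.1 hstay s hs).2
    rw [himg]
    exact (hCcpt.image continuous_fst).isClosed
  have hAcl : IsClosed A := hclosedAB α
  have hBcl : IsClosed B := hclosedAB β
  -- A and B are disjoint
  have hdisj : ∀ p, p ∈ A → p ∈ B → False := by
    rintro p ⟨hp, tA, htA, hstayA, hxA⟩ ⟨_, tB, htB, hstayB, hxB⟩
    rcases lt_trichotomy tA tB with h | h | h
    · exact (hNoTouch (ξ p) tA tB htA.1 h hstayB).1 hxA
    · have : α = β := by rw [← hxA, h, hxB]
      exact absurd this (ne_of_lt hαβ)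
    · exact (hNoTouch (ξ p) tB tA htB.1 h hstayA).2 hxB
  have hBne : B.Nonempty := ⟨η, hηB⟩
  have hBbdd : BddBelow B := ⟨ζ, fun p hp => hp.1.1⟩
  set ν := sInf B with hνdef
  have hνB : ν ∈ B := hBcl.csInf_mem hBne hBbdd
  have hνIcc : ν ∈ Set.Icc ζ η := hνB.1
  set A' := A ∩ Set.Icc ζ ν with hA'def
  have hA'ne : A'.Nonempty := ⟨ζ, hζA, le_refl ζ, hνIcc.1⟩
  have hA'bdd : BddAbove A' := ⟨ν, fun p hp => hp.2.2⟩
  set μ := sSup A' with hμdef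
  have hμA' : μ ∈ A' := (hAcl.inter isClosed_Icc).csSup_mem hA'ne hA'bdd
  have hμA : μ ∈ A := hμA'.1
  have hμν : μ < ν := lt_of_le_of_ne hμA'.2.2 fun h => hdisj μ hμA (h ▸ hνB)
  have hμIcc : μ ∈ Set.Icc ζ η := hμA.1
  -- points strictly between μ and ν are in neither A nor B
  have hU : ∀ q, μ < q → q < ν → q ∉ A ∧ q ∉ B := by
    intro q h1 h2
    constructor
    · intro hq
      exact absurd h1 (not_lt.2 (le_csSup hA'bdd ⟨hq, hq.1.1, h2.le⟩))
    · intro hq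
      exact absurd h2 (not_lt.2 (csInf_le hBbdd hq))
  -- trajectories of intermediate points stay in K
  have hUstay : ∀ q, μ < q → q < ν → ∀ t ∈ Set.Icc (0:ℝ) (b - a), φ a (ξ q) t ∈ K := by
    intro q h1 h2
    have hqIcc : q ∈ Set.Icc ζ η := ⟨hμIcc.1.trans h1.le, h2.le.trans hνIcc.2⟩
    obtain ⟨hqA, hqB⟩ := hU q h1 h2
    set S : Set ℝ := {t | t ∈ Set.Icc (0:ℝ) (b - a) ∧
      ∀ s ∈ Set.Icc (0:ℝ) 1, φ a (ξ q) (s * t) ∈ K} with hSdef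
    have hScl : IsClosed S := by
      have hSeq : S = Set.Icc (0:ℝ) (b - a) ∩
          ⋂ s ∈ Set.Icc (0:ℝ) 1, (fun t => φ a (ξ q) (s * t)) ⁻¹' K := by
        ext t
        simp only [hSdef, Set.mem_setOf_eq, Set.mem_inter_iff, Set.mem_iInter, Set.mem_preimage]
      rw [hSeq]
      exact isClosed_Icc.inter (isClosed_biInter fun s _ =>
        hKcl.preimage ((htraj (ξ q)).comp (continuous_const.mul continuous_id)))
    have h0S : (0:ℝ) ∈ S := ⟨⟨le_refl 0, hT.le⟩, fun s hs => by
      rw [mul_zero, hφ0]; exact hξK q hqIcc⟩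
    have hSbdd : BddAbove S := ⟨b - a, fun t ht => ht.1.2⟩
    set τ := sSup S with hτdef
    have hτS : τ ∈ S := hScl.csSup_mem ⟨0, h0S⟩ hSbdd
    have hτ0 : 0 ≤ τ := le_csSup hSbdd h0S
    have hstayτ : ∀ s ∈ Set.Icc 0 τ, φ a (ξ q) s ∈ K :=
      (hscale (fun u => φ a (ξ q) u ∈ K) τ hτ0).1 hτS.2
    have hτT : τ = b - a := by
      by_contra hne
      have hτlt : τ < b - a := lt_of_le_of_ne hτS.1.2 hne
      have hmem : φ a (ξ q) τ ∈ K := hstayτ τ ⟨hτ0, le_refl τ⟩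
      have hxα : (φ a (ξ q) τ).1 ≠ α := fun hx =>
        hqA ⟨hqIcc, τ, ⟨hτ0, hτlt.le⟩, hstayτ, hx⟩
      have hxβ : (φ a (ξ q) τ).1 ≠ β := fun hx =>
        hqB ⟨hqIcc, τ, ⟨hτ0, hτlt.le⟩, hstayτ, hx⟩
      have hx1 : α < (φ a (ξ q) τ).1 := lt_of_le_of_ne hmem.1.1 (Ne.symm hxα)
      have hx2 : (φ a (ξ q) τ).1 < β := lt_of_le_of_ne hmem.1.2 hxβ
      obtain ⟨u, hu, hsub⟩ := mem_nhdsGT_iff_exists_Ioo_subset.1 (hInv (ξ q) τ hmem hx1 hx2)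
      have huτ : τ < u := Set.mem_Ioi.1 hu
      set t' := min ((τ + u) / 2) (b - a) with ht'def
      have hτt' : τ < t' := lt_min (by linarith) hτlt
      have ht'S : t' ∈ S := by
        refine ⟨⟨hτ0.trans hτt'.le, min_le_right _ _⟩,
          (hscale (fun w => φ a (ξ q) w ∈ K) t' (hτ0.trans hτt'.le)).2 fun s hs => ?_⟩
        rcases le_or_gt s τ with h | h
        · exact hstayτ s ⟨hs.1, h⟩
        · exact hsub ⟨h, lt_of_le_of_lt hs.2
            (lt_of_le_of_lt (min_le_left _ _) (by linarith))⟩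
      exact absurd (le_csSup hSbdd ht'S) (not_le.2 hτt')
    intro t ht
    rw [hτT] at hstayτ
    exact hstayτ t ht
  -- trajectories of all points of [μ, ν] stay in K (by closedness)
  have hC : ∀ p ∈ Set.Icc μ ν, ∀ t ∈ Set.Icc (0:ℝ) (b - a), φ a (ξ p) t ∈ K := by
    have hCcl : IsClosed (⋂ t ∈ Set.Icc (0:ℝ) (b - a),
        Set.Icc ζ η ∩ (fun p => φ a (ξ p) t) ⁻¹' K) :=
      isClosed_biInter fun t _ =>
        (hφcont.comp_continuousOn
          (continuousOn_const.prodMk (hξ.prodMk continuousOn_const))).preimage_isClosed_of_isClosed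
          isClosed_Icc hKcl
    have hsub : Set.Ioo μ ν ⊆ ⋂ t ∈ Set.Icc (0:ℝ) (b - a),
        Set.Icc ζ η ∩ (fun p => φ a (ξ p) t) ⁻¹' K := by
      intro q hq
      exact Set.mem_biInter fun t ht =>
        ⟨⟨hμIcc.1.trans hq.1.le, hq.2.le.trans hνIcc.2⟩, hUstay q hq.1 hq.2 t ht⟩
    have hsub2 : Set.Icc μ ν ⊆ ⋂ t ∈ Set.Icc (0:ℝ) (b - a),
        Set.Icc ζ η ∩ (fun p => φ a (ξ p) t) ⁻¹' K := by
      rw [← closure_Ioo (ne_of_lt hμν)]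
      exact closure_minimal hsub hCcl
    intro p hp t ht
    exact (Set.mem_iInter₂.1 (hsub2 hp) t ht).2
  have hstayμ : ∀ t ∈ Set.Icc (0:ℝ) (b - a), φ a (ξ μ) t ∈ K :=
    hC μ (Set.left_mem_Icc.2 hμν.le)
  have hstayν : ∀ t ∈ Set.Icc (0:ℝ) (b - a), φ a (ξ ν) t ∈ K :=
    hC ν (Set.right_mem_Icc.2 hμν.le)
  have hμα : (φ a (ξ μ) (b - a)).1 = α := by
    obtain ⟨_, t, ht, hstayt, hx⟩ := hμA
    rcases eq_or_lt_of_le ht.2 with h | h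
    · rwa [h] at hx
    · exact absurd hx (hNoTouch (ξ μ) t (b - a) ht.1 h hstayμ).1
  have hνβ : (φ a (ξ ν) (b - a)).1 = β := by
    obtain ⟨_, t, ht, hstayt, hx⟩ := hνB
    rcases eq_or_lt_of_le ht.2 with h | h
    · rwa [h] at hx
    · exact absurd hx (hNoTouch (ξ ν) t (b - a) ht.1 h hstayν).2
  have hζμ : ζ < μ := by
    rcases eq_or_lt_of_le hμIcc.1 with h | h
    · exfalso
      have hx0 : (φ a (ξ μ) 0).1 = α := by rw [hφ0, ← h]; exact hξζ
      exact (hNoTouch (ξ μ) 0 (b - a) (le_refl 0) hT hstayμ).1 hx0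
    · exact h
  have hνη : ν < η := by
    rcases eq_or_lt_of_le hνIcc.2 with h | h
    · exfalso
      have hx0 : (φ a (ξ ν) 0).1 = β := by rw [hφ0, h]; exact hξη
      exact (hNoTouch (ξ ν) 0 (b - a) (le_refl 0) hT hstayν).2 hx0
    · exact h
  exact ⟨μ, ν, hζμ, hμν, hνη, fun t ht p hp => hC p hp t ht, hμα, hνβ⟩
end
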